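/- Let X be a Hausdorff topological space and M an increasing multi-family on X. Then for every finite subset F of X, Inn(cl M)(F) ≤ cl(Inn M)(F), where Inn is the inner hull and cl the closure of a multi-family. -/

import Mathlib

/-- A multi-family `M` on `X` is *increasing* if `S ⊆ S'` implies `M S ≤ M S'`. -/
def IsIncreasing {X : Type*} (M : Set X → ℕ∞) : Prop :=
  ∀ S S' : Set X, S ⊆ S' → M S ≤ M S'

/-- The *inner hull* of a multi-family `M` on `X`: the supremum of `M S₁ + … + M S_k`
over all finite families of pairwise disjoint sets `S₁, …, S_k` with `S₁ ∪ … ∪ S_k = S`. -/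
noncomputable def InnHull {X : Type*} (M : Set X → ℕ∞) (S : Set X) : ℕ∞ :=
  ⨆ (k : ℕ) (T : Fin k → Set X) (_ : (⋃ i, T i) = S)
    (_ : Pairwise (Function.onFun Disjoint T)), ∑ i, M (T i)

/-- The *closure* of a multi-family `M` on a topological space `X`: the infimum of
`M U` over all open `U ⊇ S`. -/
noncomputable def clM {X : Type*} [TopologicalSpace X] (M : Set X → ℕ∞) (S : Set X) : ℕ∞ :=
  ⨅ (U : Set X) (_ : IsOpen U) (_ : S ⊆ U), M U

/-- In a Hausdorff space, on finite sets the inner hull of the closure is dominated by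
the closure of the inner hull. -/
theorem innHull_cl_le {X : Type*} [TopologicalSpace X] [T2Space X] (M : Set X → ℕ∞)
    (hM : IsIncreasing M) (F : Set X) (hF : F.Finite) :
    InnHull (clM M) F ≤ clM (InnHull M) F := by
  refine iSup_le fun k => iSup_le fun T => iSup_le fun hTF => iSup_le fun hTd => ?_
  refine le_iInf fun U => le_iInf fun hU => le_iInf fun hFU => ?_
  -- separate points of F by pairwise disjoint open sets
  obtain ⟨w, hw, hwdisj⟩ := hF.t2_separation
  -- open neighborhoods of the pieces
  set W : Fin k → Set X := fun i => ⋃ x ∈ T i, (w x ∩ U) with hW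
  have hTsub : ∀ i, T i ⊆ F := fun i => hTF ▸ Set.subset_iUnion T i
  have hWopen : ∀ i, IsOpen (W i) := fun i =>
    isOpen_biUnion fun x _ => (hw x).2.inter hU
  have hWU : ∀ i, W i ⊆ U := fun i =>
    Set.iUnion₂_subset fun x _ => Set.inter_subset_right
  have hTW : ∀ i, T i ⊆ W i := by
    intro i x hx
    exact Set.mem_biUnion hx ⟨(hw x).1, hFU (hTsub i hx)⟩
  have hWdisj : Pairwise (Function.onFun Disjoint W) := by
    intro i j hij
    refine Set.disjoint_left.2 fun a hai haj => ?_
    obtain ⟨x, hx, hax⟩ := Set.mem_iUnion₂.1 hai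
    obtain ⟨y, hy, hay⟩ := Set.mem_iUnion₂.1 haj
    have hxy : x ≠ y := by
      rintro rfl
      exact (hTd hij).le_bot ⟨hx, hy⟩
    exact (hwdisj (hTsub i hx) (hTsub j hy) hxy).le_bot ⟨hax.1, hay.1⟩
  -- the decomposition of U : the W i plus the remainder
  set V : Fin (k + 1) → Set X := Fin.snoc W (U \ ⋃ i, W i) with hV
  have hVunion : (⋃ i, V i) = U := by
    apply subset_antisymm
    · refine Set.iUnion_subset fun i => ?_
      induction i using Fin.lastCases with
      | last => simp only [hV, Fin.snoc_last]; exact Set.diff_subset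
      | cast j => simp only [hV, Fin.snoc_castSucc]; exact hWU j
    · intro x hx
      by_cases hmem : x ∈ ⋃ i, W i
      · obtain ⟨i, hi⟩ := Set.mem_iUnion.1 hmem
        exact Set.mem_iUnion.2 ⟨Fin.castSucc i, by simpa [hV, Fin.snoc_castSucc] using hi⟩
      · exact Set.mem_iUnion.2 ⟨Fin.last k, by
          simp only [hV, Fin.snoc_last]; exact ⟨hx, hmem⟩⟩
  have hVdisj : Pairwise (Function.onFun Disjoint V) := by
    have key : ∀ (i : Fin k), Disjoint (W i) (U \ ⋃ j, W j) := fun i =>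
      Set.disjoint_sdiff_right.mono_left (Set.subset_iUnion W i)
    intro i j hij
    induction i using Fin.lastCases with
    | last =>
      induction j using Fin.lastCases with
      | last => exact absurd rfl hij
      | cast j' =>
        simp only [Function.onFun, hV, Fin.snoc_last, Fin.snoc_castSucc]
        exact (key j').symm
    | cast i' =>
      induction j using Fin.lastCases with
      | last =>
        simp only [Function.onFun, hV, Fin.snoc_last, Fin.snoc_castSucc]
        exact key i'
      | cast j' =>
        simp only [Function.onFun, hV, Fin.snoc_castSucc]
        exact hWdisj fun h => hij (by rw [h])
  -- now compare sums
  calc ∑ i, clM M (T i) ≤ ∑ i, M (W i) := by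
        refine Finset.sum_le_sum fun i _ => ?_
        exact iInf_le_of_le (W i) (iInf_le_of_le (hWopen i) (iInf_le_of_le (hTW i) le_rfl))
    _ ≤ ∑ i, M (V i) := by
        rw [Fin.sum_univ_castSucc]
        simp only [hV, Fin.snoc_castSucc]
        exact le_add_of_nonneg_right zero_le
    _ ≤ InnHull M U :=
        le_iSup_of_le (k + 1) (le_iSup_of_le V (le_iSup_of_le hVunion
          (le_iSup_of_le hVdisj le_rfl)))
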